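/- Let G and A be abelian groups and let z : G⁴ → A be a normalized cubical 3-cocycle, i.e. z satisfies the cocycle identity z(x,y,w,t) + z(x',y',w',t') − z(x+x', y+y', w+w', t+t') + z(x,w,x',w') + z(y,t,y',t') − z(x+y, w+t, x'+y', w'+t') = z(x,y,x',y') + z(w,t,w',t') − z(x+w, y+t, x'+w', y'+t') for all arguments, together with the normalization conditions z(x,y,0,0) = z(0,0,x,y) = z(x,0,0,y) = z(0,x,0,y) = z(x,0,y,0) = 0. Then z is antisymmetric in its middle two arguments: z(x,y,w,t) + z(x,w,y,t) = 0 for all x, y, w, t ∈ G. -/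
import Mathlib


theorem stmt_5 {G A : Type*} [AddCommGroup G] [AddCommGroup A]
    (z : G → G → G → G → A)
    (hcoc : ∀ x y w t x' y' w' t',
      z x y w t + z x' y' w' t' - z (x + x') (y + y') (w + w') (t + t')
        + z x w x' w' + z y t y' t'
        - z (x + y) (w + t) (x' + y') (w' + t')
      = z x y x' y' + z w t w' t' - z (x + w) (y + t) (x' + w') (y' + t'))
    (hn1 : ∀ x y, z x y 0 0 = 0) (hn2 : ∀ x y, z 0 0 x y = 0)
    (hn3 : ∀ x y, z x 0 0 y = 0) (hn4 : ∀ x y, z 0 x 0 y = 0)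
    (hn5 : ∀ x y, z x 0 y 0 = 0) :
    ∀ x y w t, z x y w t + z x w y t = 0 := by
  intro x y w t
  have H0 := hcoc (0) (0) (0) (x) (0) (y) (w) (0)
  have H1 := hcoc (0) (0) (0) (x) (0) (w) (y) (0)
  have H2 := hcoc (0) (0) (0) (y) (x) (w) (0) (0)
  have H3 := hcoc (0) (0) (0) (y) (w) (0) (x) (0)
  have H4 := hcoc (0) (0) (0) (w) (x) (y) (0) (0)
  have H5 := hcoc (0) (0) (0) (w) (y) (0) (x) (0)
  have H6 := hcoc (0) (0) (0) (t) (x) (y) (w) (0)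
  have H7 := hcoc (0) (0) (0) (t) (x) (w) (y) (0)
  have H8 := hcoc (0) (0) (x) (0) (0) (y) (0) (0)
  have H9 := hcoc (0) (0) (x) (0) (0) (w) (0) (0)
  have H10 := hcoc (0) (0) (x) (y) (0) (w) (0) (0)
  have H11 := hcoc (0) (0) (x) (y) (w) (0) (0) (0)
  have H12 := hcoc (0) (0) (x) (w) (0) (y) (0) (0)
  have H13 := hcoc (0) (0) (x) (w) (y) (0) (0) (0)
  have H14 := hcoc (0) (0) (y) (0) (0) (w) (0) (0)
  simp only [zero_add, add_zero] at H0 H1 H2 H3 H4 H5 H6 H7 H8 H9 H10 H11 H12 H13 H14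
  rw [add_comm w x] at H3
  rw [add_comm y x] at H5
  linear_combination (norm := module) H0 + H1 - H2 - H3 - H4 - H5 - H6 - H7 + H8 + H9 - H10 + H11 - H12 + H13 - H14 - hn2 (0) (x) - hn2 (0) (x) + hn2 (0) (y) + hn2 (0) (y) + hn5 (w) (x) + hn2 (w) (x) + hn2 (0) (w) + hn5 (y) (x) + hn2 (y) (x) + hn2 (0) (t) + hn2 (0) (t) + hn1 (x) (0) + hn1 (x) (0) - hn3 (x) (y) - hn3 (x) (w) - hn2 (x) (y) - hn1 (w) (0) + hn1 (x) (y) - hn2 (x) (w) - hn1 (y) (0) - hn1 (y) (0) + hn1 (x) (w) + hn3 (y) (w)
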